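/- Suppose A is a coin sequence containing at least one heads-up coin and A' is obtained from A by removing a heads-up coin in the no-gaps game (remove a 1, flip neighbors, close the gap), and A' also contains at least one 1. Then S(A) ≡ 2 (mod 3) if and only if S(A') ≡ 2 (mod 3). -/

import Mathlib

/-- Flip the entry at index `j` (no-op if out of range). -/
def ngFlip (l : List Bool) (j : ℕ) : List Bool :=
  l.set j (!(l.getD j false))

/-- One move in the no-gaps linear coin-removal game: remove a `true` entry at
position `i`, flipping the adjacent entries (if they exist) and closing the gap. -/
def ngStep (A B : List Bool) : Prop :=
  ∃ i, i < A.length ∧ A.getD i false = true ∧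
    B = ((ngFlip (ngFlip A (i + 1)) (i - 1)).eraseIdx i)

/-- `Reducible A B`: some sequence of moves transforms `A` into `B`. -/
def Reducible : List Bool → List Bool → Prop :=
  Relation.ReflTransGen ngStep

/-- A sequence is removable if it reduces to the empty list. -/
def Removable (A : List Bool) : Prop :=
  Reducible A []


/-- Signed sum of the `true` entries of a list, the sign toggling at each `false`. -/
def signedSum : ℤ → List Bool → ℤ
  | _, [] => 0
  | s, (true :: l) => s + signedSum s l
  | s, (false :: l) => signedSum (-s) l

/-- The parity sum `S(A) = h₀ + ∑_{i=1}^n (-1)^{pᵢ} hᵢ - pₙ`, where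
`A = 1^{h₀} 0^{t₁} 1^{h₁} ⋯ 0^{tₙ} 1^{hₙ}` and `pᵢ ≡ t₁ + ⋯ + tᵢ (mod 2)`. -/
def pS (A : List Bool) : ℤ :=
  signedSum 1 A - ((A.count false % 2 : ℕ) : ℤ)

lemma mod3_iff (x y : ℤ) (h : y = 1 - x ∨ y = x + 3 ∨ y = x - 3) :
    x % 3 = 2 ↔ y % 3 = 2 := by
  rcases h with rfl | rfl | rfl <;> omega

lemma signedSum_mul (l : List Bool) : ∀ s : ℤ, signedSum s l = s * signedSum 1 l := by
  induction l with
  | nil => intro s; simp [signedSum]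
  | cons b l ih =>
    intro s
    cases b
    · simp only [signedSum]; rw [ih, ih (-1)]; ring
    · simp only [signedSum]; rw [ih]; ring

lemma signedSum_neg_one (l : List Bool) : signedSum (-1) l = - signedSum 1 l := by
  rw [signedSum_mul]; ring

lemma signedSum_append (X Y : List Bool) : ∀ s : ℤ,
    signedSum s (X ++ Y) = signedSum s X + (-1 : ℤ) ^ (X.count false) * s * signedSum 1 Y := by
  induction X with
  | nil => intro s; simp only [List.nil_append, signedSum, List.count_nil, pow_zero]
           rw [signedSum_mul]; ring
  | cons b X ih =>
    intro s
    cases b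
    · simp only [List.cons_append, signedSum, List.count_cons, List.append_eq]
      rw [ih (-s)]; simp [pow_succ]; try ring
    · simp only [List.cons_append, signedSum, List.count_cons, List.append_eq]
      rw [ih s]; simp [pow_succ]; try ring

lemma pS_append (L M : List Bool) :
    pS (L ++ M) = signedSum 1 L + (-1 : ℤ) ^ (L.count false) * signedSum 1 M -
      (((L.count false + M.count false) % 2 : ℕ) : ℤ) := by
  simp only [pS, signedSum_append, List.count_append, mul_one]

lemma ngFlip_cons (x : Bool) (l : List Bool) (k : ℕ) :
    ngFlip (x :: l) (k + 1) = x :: ngFlip l k := by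
  simp [ngFlip]

lemma ngFlip_zero (x : Bool) (l : List Bool) :
    ngFlip (x :: l) 0 = (!x) :: l := by
  simp [ngFlip]

lemma ngFlip_append (L l : List Bool) (k : ℕ) :
    ngFlip (L ++ l) (L.length + k) = L ++ ngFlip l k := by
  induction L with
  | nil => simp
  | cons x L ih =>
    have h : (x :: L).length + k = (L.length + k) + 1 := by simp; omega
    rw [List.cons_append, h, ngFlip_cons, ih, List.cons_append]

lemma eraseIdx_append (L l : List Bool) (k : ℕ) :
    (L ++ l).eraseIdx (L.length + k) = L ++ l.eraseIdx k := by
  induction L with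
  | nil => simp
  | cons x L ih =>
    have h : (x :: L).length + k = (L.length + k) + 1 := by simp; omega
    rw [List.cons_append, h, List.eraseIdx_cons_succ, ih, List.cons_append]

/-- If `A'` is obtained from `A` by one move of the no-gaps game, and both
contain at least one `1`, then `S(A) ≡ 2 (mod 3)` iff `S(A') ≡ 2 (mod 3)`. -/
theorem pS_invariant_mod_three (A A' : List Bool) (hA : true ∈ A) (hA' : true ∈ A')
    (hstep : ngStep A A') :
    pS A % 3 = 2 ↔ pS A' % 3 = 2 := by
  obtain ⟨i, hi, hval, hB⟩ := hstep
  obtain ⟨L, R, rfl, rfl⟩ : ∃ L R, A = L ++ true :: R ∧ L.length = i := by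
    have hget : A[i] = true := by rwa [List.getD_eq_getElem A false hi] at hval
    refine ⟨A.take i, A.drop (i + 1), ?_, ?_⟩
    · conv_lhs => rw [← List.take_append_drop i A, List.drop_eq_getElem_cons hi, hget]
    · simp [List.length_take]; omega
  clear hval hi hA
  rcases L.eq_nil_or_concat with rfl | ⟨L₀, a, rfl⟩
  · -- L = []
    simp only [List.length_nil, List.nil_append, Nat.zero_add, Nat.zero_sub] at hB
    cases R with
    | nil =>
      -- A = [true], A' = []: contradicts hA'
      have : A' = [] := by
        rw [hB]; rfl
      subst this; simp at hA'
    | cons b R₀ =>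
      rw [show (1 : ℕ) = 0 + 1 from rfl, ngFlip_cons, ngFlip_zero, ngFlip_zero,
        List.eraseIdx_cons_zero] at hB
      subst hB
      cases b <;>
        simp only [pS, signedSum, signedSum_neg_one, neg_neg, Bool.not_true, Bool.not_false,
          List.count_cons, List.count_nil] <;>
        simp [signedSum, signedSum_neg_one] <;> (apply mod3_iff; omega)
  · -- L = L₀ ++ [a]
    simp only [List.concat_eq_append] at hB ⊢
    have hlen : (L₀ ++ [a]).length = L₀.length + 1 := by simp
    have hassoc : (L₀ ++ [a]) ++ true :: R = L₀ ++ a :: true :: R := by simp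
    rw [hlen, hassoc, show L₀.length + 1 + 1 = L₀.length + 2 from rfl,
      show L₀.length + 1 - 1 = L₀.length + 0 from by omega, ngFlip_append,
      ngFlip_append] at hB
    cases R with
    | nil =>
      have h2 : ngFlip (a :: true :: ([] : List Bool)) 2 = [a, true] := by
        simp [ngFlip]
      rw [h2] at hB
      rw [show (0 : ℕ) = 0 from rfl, ngFlip_zero] at hB
      rw [show L₀.length + 1 = L₀.length + 1 from rfl, eraseIdx_append,
        List.eraseIdx_cons_succ, List.eraseIdx_cons_zero] at hB
      subst hB
      rw [hassoc, pS_append, pS_append]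
      cases a <;>
        simp only [signedSum, signedSum_neg_one, neg_neg, Bool.not_true, Bool.not_false,
          List.count_cons, List.count_nil] <;>
        rcases Nat.even_or_odd (L₀.count false) with he | ho
      case false.inl | true.inl =>
        rw [Even.neg_one_pow he]; obtain ⟨r, hr⟩ := he; simp; apply mod3_iff; omega
      case false.inr | true.inr =>
        rw [Odd.neg_one_pow ho]; obtain ⟨r, hr⟩ := ho; simp; apply mod3_iff; omega
    | cons b R₀ =>
      rw [show (2 : ℕ) = 1 + 1 from rfl, ngFlip_cons, ngFlip_cons, ngFlip_zero,
        ngFlip_zero] at hB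
      rw [eraseIdx_append, List.eraseIdx_cons_succ, List.eraseIdx_cons_zero] at hB
      subst hB
      rw [hassoc, pS_append, pS_append]
      cases a <;> cases b <;>
        simp only [signedSum, signedSum_neg_one, neg_neg, Bool.not_true, Bool.not_false,
          List.count_cons, List.count_nil] <;>
        rcases Nat.even_or_odd (L₀.count false) with he | ho
      case false.false.inl | false.true.inl | true.false.inl | true.true.inl =>
        rw [Even.neg_one_pow he]; obtain ⟨r, hr⟩ := he; simp; apply mod3_iff; omega
      case false.false.inr | false.true.inr | true.false.inr | true.true.inr =>
        rw [Odd.neg_one_pow ho]; obtain ⟨r, hr⟩ := ho; simp; apply mod3_iff; omega
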